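/- arXiv:2209.13119 — 2 statements merged into one kernel-verified Lean document; each statement's English description precedes it below -/
import Mathlib

section
/- Let n and m be nonempty finite types. Let w : n → n → ℝ be a weight function with 0 ≤ w i j for all i, j and w i i = 0, whose graph is strongly connected, and let L be its Laplacian. Let Δt : ℝ with 0 < Δt, and set A = Matrix.exp ℝ (-(Δt • L)). Suppose C : Matrix m n ℝ is a state-output matrix, i.e. there is a function f : m → n such that C i j = 1 if j = f i and C i j = 0 otherwise. Then the pair (A, C) is uniformly detectable: there exist p q : ℕ and a b : ℝ with 0 ≤ a < 1 and 0 < b such that for every ζ : n → ℝ satisfying a * ‖ζ‖ ≤ ‖(A ^ p) *ᵥ ζ‖, one has b * (ζ ⬝ᵥ ζ) ≤ ∑ i in Finset.range (q + 1), (C *ᵥ ((A ^ i) *ᵥ ζ)) ⬝ᵥ (C *ᵥ ((A ^ i) *ᵥ ζ)). -/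
open Matrix NormedSpace Nat Finset
set_option linter.unusedSectionVars false
set_option maxHeartbeats 1000000

section Helpers
variable {n : Type*} [Fintype n] [DecidableEq n] [Nonempty n]

private noncomputable def entryCLM (i j : n) : Matrix n n ℝ →L[ℝ] ℝ :=
  LinearMap.toContinuousLinearMap
    { toFun := fun M => M i j
      map_add' := fun _ _ => rfl
      map_smul' := fun _ _ => rfl }

private lemma entry_exp_eq (M : Matrix n n ℝ) (i j : n) :
    NormedSpace.exp M i j = ∑' (k : ℕ), (k ! : ℝ)⁻¹ * (M ^ k) i j := by
  letI : SeminormedRing (Matrix n n ℝ) := Matrix.linftyOpSemiNormedRing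
  letI : NormedRing (Matrix n n ℝ) := Matrix.linftyOpNormedRing
  letI : NormedAlgebra ℝ (Matrix n n ℝ) := Matrix.linftyOpNormedAlgebra
  have hs : Summable fun k : ℕ => (k ! : ℝ)⁻¹ • M ^ k := expSeries_summable' M
  have := (entryCLM i j).map_tsum hs
  rw [exp_eq_tsum ℝ]
  exact this

private lemma pow_entries_nonneg (M : Matrix n n ℝ) (hM : ∀ i j, 0 ≤ M i j) (k : ℕ) :
    ∀ i j, 0 ≤ (M ^ k) i j := by
  induction k with
  | zero => intro i j; by_cases h : i = j <;> simp [Matrix.one_apply, h]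
  | succ k ih =>
    intro i j
    rw [pow_succ, Matrix.mul_apply]
    exact Finset.sum_nonneg fun c _ => mul_nonneg (ih i c) (hM c j)

private lemma exp_entry_pos (M : Matrix n n ℝ) (hM : ∀ i j, 0 ≤ M i j) (i j : n)
    (h : ∃ k, 0 < (M ^ k) i j) : 0 < NormedSpace.exp M i j := by
  letI : SeminormedRing (Matrix n n ℝ) := Matrix.linftyOpSemiNormedRing
  letI : NormedRing (Matrix n n ℝ) := Matrix.linftyOpNormedRing
  letI : NormedAlgebra ℝ (Matrix n n ℝ) := Matrix.linftyOpNormedAlgebra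
  have hs : Summable fun k : ℕ => (k ! : ℝ)⁻¹ • M ^ k := expSeries_summable' M
  have hs' : Summable fun k : ℕ => (k ! : ℝ)⁻¹ * (M ^ k) i j := by
    have := (entryCLM i j).summable hs
    exact this
  obtain ⟨k, hk⟩ := h
  rw [entry_exp_eq]
  refine Summable.tsum_pos hs' (fun k => ?_) k ?_
  · exact mul_nonneg (by positivity) (pow_entries_nonneg M hM k i j)
  · exact mul_pos (by positivity) hk

private noncomputable def mulVecOneCLM : Matrix n n ℝ →L[ℝ] (n → ℝ) :=
  LinearMap.toContinuousLinearMap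
    { toFun := fun M => M *ᵥ (fun _ => 1)
      map_add' := fun M N => Matrix.add_mulVec M N _
      map_smul' := fun c M => Matrix.smul_mulVec c M _ }

private lemma mulVecOneCLM_apply (M : Matrix n n ℝ) :
    mulVecOneCLM M = M *ᵥ (fun _ => 1) := rfl

private lemma exp_mulVec_one (M : Matrix n n ℝ) (h : M *ᵥ (fun _ => 1) = 0) :
    NormedSpace.exp M *ᵥ (fun _ => 1) = fun _ => 1 := by
  letI : SeminormedRing (Matrix n n ℝ) := Matrix.linftyOpSemiNormedRing
  letI : NormedRing (Matrix n n ℝ) := Matrix.linftyOpNormedRing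
  letI : NormedAlgebra ℝ (Matrix n n ℝ) := Matrix.linftyOpNormedAlgebra
  have hs : Summable fun k : ℕ => (k ! : ℝ)⁻¹ • M ^ k := expSeries_summable' M
  have hmap := (mulVecOneCLM (n := n)).map_tsum hs
  have hk : ∀ k : ℕ, k ≠ 0 → mulVecOneCLM ((k ! : ℝ)⁻¹ • M ^ k) = 0 := by
    intro k hk0
    obtain ⟨k, rfl⟩ := Nat.exists_eq_succ_of_ne_zero hk0
    rw [_root_.map_smul, mulVecOneCLM_apply, pow_succ, ← Matrix.mulVec_mulVec, h]
    simp
  rw [exp_eq_tsum ℝ, ← mulVecOneCLM_apply, hmap, tsum_eq_single 0 (fun k hk0 => hk k hk0)]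
  rw [_root_.map_smul, mulVecOneCLM_apply]
  simp [Matrix.one_mulVec]

private lemma exp_smul_one (c : ℝ) :
    NormedSpace.exp (c • (1 : Matrix n n ℝ)) = Real.exp c • (1 : Matrix n n ℝ) := by
  letI : SeminormedRing (Matrix n n ℝ) := Matrix.linftyOpSemiNormedRing
  letI : NormedRing (Matrix n n ℝ) := Matrix.linftyOpNormedRing
  letI : NormedAlgebra ℝ (Matrix n n ℝ) := Matrix.linftyOpNormedAlgebra
  rw [← Algebra.algebraMap_eq_smul_one]
  erw [← algebraMap_exp_comm]
  rw [Real.exp_eq_exp_ℝ,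
    Algebra.algebraMap_eq_smul_one]

private lemma stoch_mulVec_le (A : Matrix n n ℝ) (ε : ℝ) (hε : 0 ≤ ε)
    (hA : ∀ i j, ε ≤ A i j) (hrow : ∀ i, ∑ k, A i k = 1) (x : n → ℝ) (i : n) :
    (A *ᵥ x) i ≤ (1 - ε) * univ.sup' univ_nonempty x + ε * univ.inf' univ_nonempty x := by
  obtain ⟨k0, -, hk0⟩ := Finset.exists_mem_eq_inf' (univ_nonempty) x
  have hMm : univ.inf' univ_nonempty x ≤ univ.sup' univ_nonempty x :=
    le_trans (Finset.inf'_le _ (Finset.mem_univ (Classical.arbitrary n)))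
      (Finset.le_sup' _ (Finset.mem_univ _))
  have hexp : (A *ᵥ x) i = A i k0 * x k0 + ∑ k ∈ univ.erase k0, A i k * x k := by
    simp only [Matrix.mulVec, dotProduct]
    rw [← Finset.add_sum_erase _ (fun k => A i k * x k) (Finset.mem_univ k0)]
  have hbd : ∑ k ∈ univ.erase k0, A i k * x k
      ≤ (1 - A i k0) * univ.sup' univ_nonempty x := by
    calc ∑ k ∈ univ.erase k0, A i k * x k
        ≤ ∑ k ∈ univ.erase k0, A i k * univ.sup' univ_nonempty x :=
          Finset.sum_le_sum fun k _ => mul_le_mul_of_nonneg_left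
            (Finset.le_sup' _ (Finset.mem_univ k)) (le_trans hε (hA i k))
      _ = (1 - A i k0) * univ.sup' univ_nonempty x := by
          rw [← Finset.sum_mul, Finset.sum_erase_eq_sub (Finset.mem_univ k0), hrow i]
  have h0 := hA i k0
  nlinarith [hk0 ▸ le_refl (x k0)]

private lemma stoch_mulVec_ge (A : Matrix n n ℝ) (ε : ℝ) (hε : 0 ≤ ε)
    (hA : ∀ i j, ε ≤ A i j) (hrow : ∀ i, ∑ k, A i k = 1) (x : n → ℝ) (i : n) :
    ε * univ.sup' univ_nonempty x + (1 - ε) * univ.inf' univ_nonempty x ≤ (A *ᵥ x) i := by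
  obtain ⟨k1, -, hk1⟩ := Finset.exists_mem_eq_sup' (univ_nonempty) x
  have hMm : univ.inf' univ_nonempty x ≤ univ.sup' univ_nonempty x :=
    le_trans (Finset.inf'_le _ (Finset.mem_univ (Classical.arbitrary n)))
      (Finset.le_sup' _ (Finset.mem_univ _))
  have hexp : (A *ᵥ x) i = A i k1 * x k1 + ∑ k ∈ univ.erase k1, A i k * x k := by
    simp only [Matrix.mulVec, dotProduct]
    rw [← Finset.add_sum_erase _ (fun k => A i k * x k) (Finset.mem_univ k1)]
  have hbd : (1 - A i k1) * univ.inf' univ_nonempty x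
      ≤ ∑ k ∈ univ.erase k1, A i k * x k := by
    calc (1 - A i k1) * univ.inf' univ_nonempty x
        = ∑ k ∈ univ.erase k1, A i k * univ.inf' univ_nonempty x := by
          rw [← Finset.sum_mul, Finset.sum_erase_eq_sub (Finset.mem_univ k1), hrow i]
      _ ≤ ∑ k ∈ univ.erase k1, A i k * x k :=
          Finset.sum_le_sum fun k _ => mul_le_mul_of_nonneg_left
            (Finset.inf'_le _ (Finset.mem_univ k)) (le_trans hε (hA i k))
  have h0 := hA i k1
  nlinarith [hk1 ▸ le_refl (x k1)]

private lemma osc_mulVec (A : Matrix n n ℝ) (ε : ℝ) (hε : 0 ≤ ε)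
    (hA : ∀ i j, ε ≤ A i j) (hrow : ∀ i, ∑ k, A i k = 1) (x : n → ℝ) :
    univ.sup' univ_nonempty (A *ᵥ x) - univ.inf' univ_nonempty (A *ᵥ x)
      ≤ (1 - 2 * ε) * (univ.sup' univ_nonempty x - univ.inf' univ_nonempty x) := by
  obtain ⟨i1, -, h1⟩ := Finset.exists_mem_eq_sup' (univ_nonempty) (A *ᵥ x)
  obtain ⟨i2, -, h2⟩ := Finset.exists_mem_eq_inf' (univ_nonempty) (A *ᵥ x)
  have hu := stoch_mulVec_le A ε hε hA hrow x i1
  have hl := stoch_mulVec_ge A ε hε hA hrow x i2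
  rw [h1, h2]; linarith

private lemma osc_pow (A : Matrix n n ℝ) (ε : ℝ) (hε : 0 ≤ ε)
    (hA : ∀ i j, ε ≤ A i j) (hrow : ∀ i, ∑ k, A i k = 1) (x : n → ℝ) (k : ℕ) :
    univ.sup' univ_nonempty ((A ^ k) *ᵥ x) - univ.inf' univ_nonempty ((A ^ k) *ᵥ x)
      ≤ (max (1 - 2 * ε) 0) ^ k * (univ.sup' univ_nonempty x - univ.inf' univ_nonempty x) := by
  induction k with
  | zero => simp [Matrix.one_mulVec]
  | succ k ih =>
    have hosc0 : (0:ℝ) ≤ univ.sup' univ_nonempty ((A ^ k) *ᵥ x)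
        - univ.inf' univ_nonempty ((A ^ k) *ᵥ x) := by
      have := le_trans (Finset.inf'_le _ (Finset.mem_univ (Classical.arbitrary n)))
        (Finset.le_sup' ((A ^ k) *ᵥ x) (Finset.mem_univ (Classical.arbitrary n)))
      linarith
    have hstep := osc_mulVec A ε hε hA hrow ((A ^ k) *ᵥ x)
    have hrw : A *ᵥ ((A ^ k) *ᵥ x) = (A ^ (k+1)) *ᵥ x := by
      rw [Matrix.mulVec_mulVec, ← _root_.pow_succ']
    rw [hrw] at hstep
    calc univ.sup' univ_nonempty ((A ^ (k+1)) *ᵥ x) - univ.inf' univ_nonempty ((A ^ (k+1)) *ᵥ x)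
        ≤ (1 - 2*ε) * (univ.sup' univ_nonempty ((A ^ k) *ᵥ x)
            - univ.inf' univ_nonempty ((A ^ k) *ᵥ x)) := hstep
      _ ≤ (max (1 - 2*ε) 0) * (univ.sup' univ_nonempty ((A ^ k) *ᵥ x)
            - univ.inf' univ_nonempty ((A ^ k) *ᵥ x)) :=
          mul_le_mul_of_nonneg_right (le_max_left _ _) hosc0
      _ ≤ (max (1 - 2*ε) 0) * ((max (1 - 2*ε) 0) ^ k
            * (univ.sup' univ_nonempty x - univ.inf' univ_nonempty x)) :=
          mul_le_mul_of_nonneg_left ih (le_max_right _ _)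
      _ = (max (1 - 2*ε) 0) ^ (k+1)
            * (univ.sup' univ_nonempty x - univ.inf' univ_nonempty x) := by ring

end Helpers

/-- For the Laplacian `L` of a strongly connected weighted graph,
`A = exp(-(Δt • L))` together with any state-output matrix `C` (each row a standard
basis vector) forms a uniformly detectable pair. -/
theorem laplacian_exp_state_output_uniformly_detectable
    {n m : Type*} [Fintype n] [Nonempty n] [DecidableEq n] [Fintype m] [Nonempty m]
    (w : n → n → ℝ) (hw : ∀ i j, 0 ≤ w i j) (hdiag : ∀ i, w i i = 0)
    (hconn : ∀ i j, Relation.ReflTransGen (fun a b => 0 < w a b) i j)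
    (L : Matrix n n ℝ)
    (hL : ∀ i j, L i j = if i = j then ∑ k, w i k else -(w i j))
    (Δt : ℝ) (hΔt : 0 < Δt)
    (A : Matrix n n ℝ) (hA : A = NormedSpace.exp (-(Δt • L)))
    (C : Matrix m n ℝ) (hC : ∃ f : m → n, ∀ i j, C i j = if j = f i then 1 else 0) :
    ∃ p q : ℕ, ∃ a b : ℝ, 0 ≤ a ∧ a < 1 ∧ 0 < b ∧
      ∀ ζ : n → ℝ, a * ‖ζ‖ ≤ ‖(A ^ p) *ᵥ ζ‖ →
        b * (ζ ⬝ᵥ ζ) ≤ ∑ i ∈ Finset.range (q + 1),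
          (C *ᵥ ((A ^ i) *ᵥ ζ)) ⬝ᵥ (C *ᵥ ((A ^ i) *ᵥ ζ)) := by
  obtain ⟨f, hCf⟩ := hC
  -- row sums of L vanish
  have hrowL : ∀ i, ∑ j, L i j = 0 := by
    intro i
    have h1 : ∑ j, L i j = L i i + ∑ j ∈ univ.erase i, L i j :=
      (Finset.add_sum_erase _ _ (Finset.mem_univ i)).symm
    have h2 : ∑ j ∈ univ.erase i, L i j = -∑ j ∈ univ.erase i, w i j := by
      rw [← Finset.sum_neg_distrib]
      refine Finset.sum_congr rfl fun j hj => ?_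
      have hij : i ≠ j := fun h => (Finset.mem_erase.mp hj).1 h.symm
      simp [hL i j, hij]
    have h3 : ∑ j ∈ univ.erase i, w i j = ∑ j, w i j := by
      rw [Finset.sum_erase_eq_sub (Finset.mem_univ i), hdiag i, sub_zero]
    rw [h1, h2, h3, hL i i]
    simp
  -- A has unit row sums
  have hrowA : ∀ i, ∑ k, A i k = 1 := by
    have hB1 : (-(Δt • L)) *ᵥ (fun _ => 1) = 0 := by
      funext i
      simp only [Matrix.mulVec, dotProduct, Matrix.neg_apply, Matrix.smul_apply,
        smul_eq_mul, mul_one, Pi.zero_apply]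
      rw [Finset.sum_neg_distrib, ← Finset.mul_sum, hrowL i, mul_zero, neg_zero]
    have := exp_mulVec_one _ hB1
    rw [← hA] at this
    intro i
    have := congrFun this i
    simpa [Matrix.mulVec, dotProduct] using this
  -- positivity of entries of A
  set s : ℝ := 1 + ∑ i, ∑ k, w i k with hs_def
  set M : Matrix n n ℝ := Δt • (s • (1 : Matrix n n ℝ) - L) with hM_def
  have hMij : ∀ i j, M i j = if i = j then Δt * (s - ∑ k, w i k) else Δt * w i j := by
    intro i j
    by_cases h : i = j
    · subst h
      simp [hM_def, Matrix.smul_apply, Matrix.sub_apply, Matrix.one_apply, hL]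
    · simp [hM_def, Matrix.smul_apply, Matrix.sub_apply, Matrix.one_apply, h, hL]
  have hMdiagpos : ∀ i, 0 < Δt * (s - ∑ k, w i k) := by
    intro i
    have h1 : ∑ k, w i k ≤ ∑ i', ∑ k, w i' k :=
      Finset.single_le_sum (fun i' _ => Finset.sum_nonneg fun k _ => hw i' k) (Finset.mem_univ i)
    have h2 : (0:ℝ) < s - ∑ k, w i k := by rw [hs_def]; linarith
    exact mul_pos hΔt h2
  have hMnn : ∀ i j, 0 ≤ M i j := by
    intro i j
    rw [hMij]
    by_cases h : i = j
    · rw [if_pos h]; exact (hMdiagpos i).le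
    · rw [if_neg h]; exact mul_nonneg hΔt.le (hw i j)
  have hwalk : ∀ i j : n, ∃ k, 0 < (M ^ k) i j := by
    intro i j
    have h := hconn i j
    induction h with
    | refl => exact ⟨0, by simp [Matrix.one_apply]⟩
    | @tail b c hib hbc ih =>
      obtain ⟨k, hk⟩ := ih
      refine ⟨k + 1, ?_⟩
      rw [pow_succ, Matrix.mul_apply]
      have hbc' : b ≠ c := by rintro rfl; rw [hdiag] at hbc; exact lt_irrefl 0 hbc
      have hMbc : 0 < M b c := by rw [hMij, if_neg hbc']; exact mul_pos hΔt hbc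
      exact Finset.sum_pos' (fun d _ => mul_nonneg (pow_entries_nonneg M hMnn k i d) (hMnn d c))
        ⟨b, Finset.mem_univ b, mul_pos hk hMbc⟩
  have hdec : -(Δt • L) = (-(Δt * s)) • (1 : Matrix n n ℝ) + M := by
    rw [hM_def, smul_sub, smul_smul, neg_smul]
    abel
  have hsplit : A = (Real.exp (-(Δt * s))) • NormedSpace.exp M := by
    rw [hA, hdec, Matrix.exp_add_of_commute _ _ ((Commute.one_left M).smul_left _),
      exp_smul_one, smul_mul_assoc, one_mul]
  have hApos : ∀ i j, 0 < A i j := by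
    intro i j
    rw [hsplit]
    have h1 := exp_entry_pos M hMnn i j (hwalk i j)
    simpa [Matrix.smul_apply, smul_eq_mul] using mul_pos (Real.exp_pos (-(Δt * s))) h1
  -- minimal entry and contraction factor
  set ε : ℝ := (univ : Finset (n × n)).inf' univ_nonempty (fun p => A p.1 p.2) with hε_def
  have hεpos : 0 < ε := by
    rw [hε_def, Finset.lt_inf'_iff]
    exact fun p _ => hApos p.1 p.2
  have hεle : ∀ i j, ε ≤ A i j := fun i j =>
    Finset.inf'_le (fun p : n × n => A p.1 p.2) (Finset.mem_univ (i, j))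
  set θ : ℝ := max (1 - 2 * ε) 0 with hθ_def
  have hθ0 : 0 ≤ θ := le_max_right _ _
  have hθ1 : θ < 1 := max_lt (by linarith) one_pos
  obtain ⟨q, hq⟩ := exists_pow_lt_of_lt_one (show (0:ℝ) < 1/8 by norm_num) hθ1
  have hcard : (0:ℝ) < Fintype.card n := by exact_mod_cast Fintype.card_pos
  refine ⟨q, q, 1/2, 1/(16 * (Fintype.card n : ℝ)), by norm_num, by norm_num, by positivity, ?_⟩
  intro ζ hζ
  set i₀ := Classical.arbitrary m with hi₀
  set y := (A ^ q) *ᵥ ζ with hy_def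
  set g := ∑ i ∈ Finset.range (q + 1), (C *ᵥ ((A ^ i) *ᵥ ζ)) ⬝ᵥ (C *ᵥ ((A ^ i) *ᵥ ζ)) with hg_def
  have hCv : ∀ (v : n → ℝ) (i : m), (C *ᵥ v) i = v (f i) := by
    intro v i
    simp [Matrix.mulVec, dotProduct, hCf, ite_mul]
  have htermnn : ∀ k : ℕ, 0 ≤ (C *ᵥ ((A ^ k) *ᵥ ζ)) ⬝ᵥ (C *ᵥ ((A ^ k) *ᵥ ζ)) := fun k =>
    Finset.sum_nonneg fun i _ => mul_self_nonneg _
  have hgnn : 0 ≤ g := Finset.sum_nonneg fun k _ => htermnn k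
  have hterm : y (f i₀) * y (f i₀) ≤ g := by
    have h1 : y (f i₀) * y (f i₀) ≤ (C *ᵥ y) ⬝ᵥ (C *ᵥ y) := by
      have h2 := Finset.single_le_sum (f := fun i : m => (C *ᵥ y) i * (C *ᵥ y) i)
        (fun i _ => mul_self_nonneg _) (Finset.mem_univ i₀)
      simpa [dotProduct, hCv] using h2
    refine le_trans h1 ?_
    rw [hg_def]
    exact Finset.single_le_sum
      (f := fun k => (C *ᵥ ((A ^ k) *ᵥ ζ)) ⬝ᵥ (C *ᵥ ((A ^ k) *ᵥ ζ)))
      (fun k _ => htermnn k) (Finset.mem_range.mpr (Nat.lt_succ_self q))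
  have habs : |y (f i₀)| ≤ Real.sqrt g := by
    rw [← Real.sqrt_mul_self_eq_abs]
    exact Real.sqrt_le_sqrt hterm
  have hcoordζ : ∀ i, |ζ i| ≤ ‖ζ‖ := fun i => by
    have := norm_le_pi_norm ζ i
    rwa [Real.norm_eq_abs] at this
  have hsupζ : univ.sup' univ_nonempty ζ ≤ ‖ζ‖ :=
    Finset.sup'_le _ _ fun i _ => le_trans (le_abs_self _) (hcoordζ i)
  have hinfζ : -‖ζ‖ ≤ univ.inf' univ_nonempty ζ :=
    Finset.le_inf' _ _ fun i _ => by
      have h1 := hcoordζ i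
      have h2 := neg_abs_le (ζ i)
      linarith
  have hosc := osc_pow A ε hεpos.le hεle hrowA ζ q
  have hycoord : ∀ i, |y i| ≤ θ ^ q * (2 * ‖ζ‖) + Real.sqrt g := by
    intro i
    have hsy : y i ≤ univ.sup' univ_nonempty y := Finset.le_sup' y (Finset.mem_univ i)
    have hsy' : y (f i₀) ≤ univ.sup' univ_nonempty y := Finset.le_sup' y (Finset.mem_univ _)
    have hiy : univ.inf' univ_nonempty y ≤ y i := Finset.inf'_le y (Finset.mem_univ i)
    have hiy' : univ.inf' univ_nonempty y ≤ y (f i₀) := Finset.inf'_le y (Finset.mem_univ _)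
    have h1 : |y i - y (f i₀)| ≤ univ.sup' univ_nonempty y - univ.inf' univ_nonempty y := by
      rw [abs_le]; constructor <;> linarith
    have h2 : univ.sup' univ_nonempty y - univ.inf' univ_nonempty y ≤ θ ^ q * (2 * ‖ζ‖) := by
      refine le_trans hosc ?_
      have h3 : univ.sup' univ_nonempty ζ - univ.inf' univ_nonempty ζ ≤ 2 * ‖ζ‖ := by linarith
      exact mul_le_mul_of_nonneg_left h3 (pow_nonneg hθ0 q)
    calc |y i| = |(y i - y (f i₀)) + y (f i₀)| := by ring_nf
      _ ≤ |y i - y (f i₀)| + |y (f i₀)| := abs_add_le _ _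
      _ ≤ θ ^ q * (2 * ‖ζ‖) + Real.sqrt g := add_le_add (le_trans h1 h2) habs
  have hnormy : ‖y‖ ≤ θ ^ q * (2 * ‖ζ‖) + Real.sqrt g := by
    have hb : 0 ≤ θ ^ q * (2 * ‖ζ‖) + Real.sqrt g := by positivity
    refine (pi_norm_le_iff_of_nonneg hb).mpr fun i => ?_
    rw [Real.norm_eq_abs]
    exact hycoord i
  have hq2 : θ ^ q * (2 * ‖ζ‖) ≤ (1/8) * (2 * ‖ζ‖) :=
    mul_le_mul_of_nonneg_right hq.le (by positivity)
  have hquarter : ‖ζ‖ / 4 ≤ Real.sqrt g := by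
    have := hζ
    linarith
  have hsq : (‖ζ‖/4) * (‖ζ‖/4) ≤ g := by
    have h1 := mul_self_le_mul_self (by positivity : (0:ℝ) ≤ ‖ζ‖/4) hquarter
    rwa [Real.mul_self_sqrt hgnn] at h1
  have hdot : ζ ⬝ᵥ ζ ≤ (Fintype.card n : ℝ) * (‖ζ‖ * ‖ζ‖) := by
    have h1 : ∀ i : n, ζ i * ζ i ≤ ‖ζ‖ * ‖ζ‖ := fun i => by
      calc ζ i * ζ i = |ζ i| * |ζ i| := (abs_mul_abs_self _).symm
        _ ≤ ‖ζ‖ * ‖ζ‖ := mul_self_le_mul_self (abs_nonneg _) (hcoordζ i)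
    calc ζ ⬝ᵥ ζ = ∑ i, ζ i * ζ i := rfl
      _ ≤ ∑ _i : n, ‖ζ‖ * ‖ζ‖ := Finset.sum_le_sum fun i _ => h1 i
      _ = (Fintype.card n : ℝ) * (‖ζ‖ * ‖ζ‖) := by
          rw [Finset.sum_const, nsmul_eq_mul, Finset.card_univ]
  calc (1/(16 * (Fintype.card n : ℝ))) * (ζ ⬝ᵥ ζ)
      ≤ (1/(16 * (Fintype.card n : ℝ))) * ((Fintype.card n : ℝ) * (‖ζ‖ * ‖ζ‖)) :=
        mul_le_mul_of_nonneg_left hdot (by positivity)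
    _ = (‖ζ‖/4) * (‖ζ‖/4) := by field_simp; ring
    _ ≤ g := hsq
end

section
/- Let n and m be nonempty finite types. Let A : ℕ → Matrix n n ℝ be a sequence of state transition matrices for which there exists ε > 0 such that for all k, i, j, ε ≤ (A k) i j, and for all k, i, ∑ j, (A k) i j = 1 (each A k is entrywise positive and right stochastic, uniformly in k). For k p : ℕ define the state transition matrix Φ k p : Matrix n n ℝ over p steps starting at time k by Φ k 0 = 1 (identity) and Φ k (p+1) = A (k + p) * Φ k p. Let C : Matrix m n ℝ have at least one nonzero row sum, i.e. there exists i : m with ∑ j, C i j ≠ 0. Then the time-varying pair (A, C) is uniformly detectable: there exist p q : ℕ and a b : ℝ with 0 ≤ a < 1 and 0 < b such that for every k : ℕ and every ζ : n → ℝ satisfying a * ‖ζ‖ ≤ ‖(Φ k p) *ᵥ ζ‖, one has b * (ζ ⬝ᵥ ζ) ≤ ∑ i in Finset.range (q + 1), (C *ᵥ ((Φ k i) *ᵥ ζ)) ⬝ᵥ (C *ᵥ ((Φ k i) *ᵥ ζ)). -/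
open Matrix Finset


private lemma mulVec_le_sup' {n : Type*} [Fintype n] [Nonempty n] (M : Matrix n n ℝ)
    (hnn : ∀ i j, 0 ≤ M i j) (hs : ∀ i, ∑ j, M i j = 1) (x : n → ℝ) (i : n) :
    (M *ᵥ x) i ≤ univ.sup' univ_nonempty x := by
  show ∑ j, M i j * x j ≤ _
  calc ∑ j, M i j * x j ≤ ∑ j, M i j * univ.sup' univ_nonempty x := by
        refine Finset.sum_le_sum fun j _ => ?_
        exact mul_le_mul_of_nonneg_left (le_sup' x (mem_univ j)) (hnn i j)
    _ = univ.sup' univ_nonempty x := by rw [← Finset.sum_mul, hs i, one_mul]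

private lemma inf'_le_mulVec {n : Type*} [Fintype n] [Nonempty n] (M : Matrix n n ℝ)
    (hnn : ∀ i j, 0 ≤ M i j) (hs : ∀ i, ∑ j, M i j = 1) (x : n → ℝ) (i : n) :
    univ.inf' univ_nonempty x ≤ (M *ᵥ x) i := by
  show _ ≤ ∑ j, M i j * x j
  calc univ.inf' univ_nonempty x = ∑ j, M i j * univ.inf' univ_nonempty x := by
        rw [← Finset.sum_mul, hs i, one_mul]
    _ ≤ ∑ j, M i j * x j := by
        refine Finset.sum_le_sum fun j _ => ?_
        exact mul_le_mul_of_nonneg_left (inf'_le x (mem_univ j)) (hnn i j)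

private lemma osc_step {n : Type*} [Fintype n] [Nonempty n] (ε : ℝ) (M : Matrix n n ℝ)
    (hM : ∀ i j, ε ≤ M i j) (hs : ∀ i, ∑ j, M i j = 1) (x : n → ℝ) (i i' : n) :
    (M *ᵥ x) i - (M *ᵥ x) i' ≤ (1 - Fintype.card n * ε) *
      (univ.sup' univ_nonempty x - univ.inf' univ_nonempty x) := by
  have hrs : ∀ i₁, ∑ j, (M i₁ j - ε) = 1 - Fintype.card n * ε := by
    intro i₁
    rw [Finset.sum_sub_distrib, hs i₁, Finset.sum_const, card_univ, nsmul_eq_mul]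
  have h1 : (M *ᵥ x) i ≤ (∑ j, ε * x j) + (1 - Fintype.card n * ε) * univ.sup' univ_nonempty x := by
    show ∑ j, M i j * x j ≤ _
    have : ∀ j, M i j * x j = ε * x j + (M i j - ε) * x j := by intro j; ring
    simp_rw [this]
    rw [Finset.sum_add_distrib]
    gcongr
    calc ∑ j, (M i j - ε) * x j ≤ ∑ j, (M i j - ε) * univ.sup' univ_nonempty x := by
          refine Finset.sum_le_sum fun j _ => ?_
          exact mul_le_mul_of_nonneg_left (le_sup' x (mem_univ j)) (by linarith [hM i j])
      _ = _ := by rw [← Finset.sum_mul, hrs i]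
  have h2 : (∑ j, ε * x j) + (1 - Fintype.card n * ε) * univ.inf' univ_nonempty x ≤ (M *ᵥ x) i' := by
    show _ ≤ ∑ j, M i' j * x j
    have : ∀ j, M i' j * x j = ε * x j + (M i' j - ε) * x j := by intro j; ring
    simp_rw [this]
    rw [Finset.sum_add_distrib]
    gcongr
    calc (1 - Fintype.card n * ε) * univ.inf' univ_nonempty x
        = ∑ j, (M i' j - ε) * univ.inf' univ_nonempty x := by rw [← Finset.sum_mul, hrs i']
      _ ≤ ∑ j, (M i' j - ε) * x j := by
          refine Finset.sum_le_sum fun j _ => ?_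
          exact mul_le_mul_of_nonneg_left (inf'_le x (mem_univ j)) (by linarith [hM i' j])
  linarith


/-- A time-varying pair `(A, C)` with uniformly entrywise-positive,
right-stochastic state matrices and an output matrix `C` with a nonzero row sum is
uniformly detectable. -/
theorem time_varying_stochastic_uniformly_detectable
    {n m : Type*} [Fintype n] [Nonempty n] [DecidableEq n] [Fintype m] [Nonempty m]
    (A : ℕ → Matrix n n ℝ)
    (hpos : ∃ ε : ℝ, 0 < ε ∧ ∀ k i j, ε ≤ (A k) i j)
    (hstoch : ∀ k i, ∑ j, (A k) i j = 1)
    (Φ : ℕ → ℕ → Matrix n n ℝ)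
    (hΦ0 : ∀ k, Φ k 0 = 1)
    (hΦsucc : ∀ k p, Φ k (p + 1) = A (k + p) * Φ k p)
    (C : Matrix m n ℝ) (hC : ∃ i, ∑ j, C i j ≠ 0) :
    ∃ p q : ℕ, ∃ a b : ℝ, 0 ≤ a ∧ a < 1 ∧ 0 < b ∧
      ∀ k : ℕ, ∀ ζ : n → ℝ, a * ‖ζ‖ ≤ ‖(Φ k p) *ᵥ ζ‖ →
        b * (ζ ⬝ᵥ ζ) ≤ ∑ i ∈ Finset.range (q + 1),
          (C *ᵥ ((Φ k i) *ᵥ ζ)) ⬝ᵥ (C *ᵥ ((Φ k i) *ᵥ ζ)) := by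
  classical
  obtain ⟨ε, hε, hA⟩ := hpos
  obtain ⟨i₀, hs0⟩ := hC
  set N : ℕ := Fintype.card n with hN
  have hN1 : 1 ≤ N := Fintype.card_pos
  set s : ℝ := ∑ j, C i₀ j with hsdef
  set K : ℝ := ∑ j, |C i₀ j| with hKdef
  have hsK : |s| ≤ K := Finset.abs_sum_le_sum_abs _ _
  have hspos : 0 < |s| := abs_pos.mpr hs0
  have hKpos : 0 < K := lt_of_lt_of_le hspos hsK
  set δ : ℝ := 1 - (N : ℝ) * ε with hδdef
  have hδ0 : 0 ≤ δ := by
    have i := Classical.arbitrary n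
    have h1 : (N : ℝ) * ε = ∑ _j : n, ε := by
      rw [Finset.sum_const, card_univ, nsmul_eq_mul]
    have h2 : ∑ _j : n, ε ≤ ∑ j, A 0 i j := Finset.sum_le_sum fun j _ => hA 0 i j
    rw [hstoch 0 i] at h2
    rw [hδdef, h1]; linarith
  have hδ1 : δ < 1 := by
    have : 0 < (N : ℝ) * ε := by positivity
    rw [hδdef]; linarith
  obtain ⟨p, hp⟩ := exists_pow_lt_of_lt_one (show (0:ℝ) < |s| / (16 * K) by positivity) hδ1
  -- nonnegativity and row sums of Φ
  have hΦnn : ∀ k p i j, 0 ≤ Φ k p i j := by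
    intro k p
    induction p with
    | zero => intro i j; rw [hΦ0]; by_cases h : i = j <;> simp [Matrix.one_apply, h]
    | succ q ih =>
      intro i j
      rw [hΦsucc, Matrix.mul_apply]
      exact Finset.sum_nonneg fun l _ =>
        mul_nonneg (le_trans (le_of_lt hε) (hA _ i l)) (ih l j)
  have hΦrs : ∀ k p i, ∑ j, Φ k p i j = 1 := by
    intro k p
    induction p with
    | zero => intro i; rw [hΦ0]; simp [Matrix.one_apply]
    | succ q ih =>
      intro i
      simp_rw [hΦsucc, Matrix.mul_apply]
      rw [Finset.sum_comm]
      calc ∑ l, ∑ j, A (k + q) i l * Φ k q l j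
          = ∑ l, A (k + q) i l * ∑ j, Φ k q l j := by
            simp_rw [Finset.mul_sum]
        _ = 1 := by simp_rw [ih, mul_one]; exact hstoch (k + q) i
  refine ⟨p, p, 1/2, s^2 / (16 * N), by norm_num, by norm_num, by positivity, ?_⟩
  intro k ζ hζ
  set x : n → ℝ := Φ k p *ᵥ ζ with hxdef
  have hnorm_entry : ∀ (pp : ℕ) (j : n), |(Φ k pp *ᵥ ζ) j| ≤ ‖ζ‖ := by
    intro pp j
    have : (Φ k pp *ᵥ ζ) j = ∑ l, Φ k pp j l * ζ l := rfl
    rw [this]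
    calc |∑ l, Φ k pp j l * ζ l| ≤ ∑ l, |Φ k pp j l * ζ l| := Finset.abs_sum_le_sum_abs _ _
      _ ≤ ∑ l, Φ k pp j l * ‖ζ‖ := by
          refine Finset.sum_le_sum fun l _ => ?_
          rw [abs_mul, abs_of_nonneg (hΦnn k pp j l)]
          exact mul_le_mul_of_nonneg_left
            (by rw [← Real.norm_eq_abs]; exact norm_le_pi_norm ζ l) (hΦnn k pp j l)
      _ = ‖ζ‖ := by rw [← Finset.sum_mul, hΦrs k pp j, one_mul]
  -- oscillation contraction
  set S : ℝ := univ.sup' univ_nonempty ζ with hSdef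
  set I : ℝ := univ.inf' univ_nonempty ζ with hIdef
  have hosc : ∀ pp : ℕ, univ.sup' univ_nonempty (Φ k pp *ᵥ ζ) -
      univ.inf' univ_nonempty (Φ k pp *ᵥ ζ) ≤ δ ^ pp * (S - I) := by
    intro pp
    induction pp with
    | zero =>
      have : Φ k 0 *ᵥ ζ = ζ := by rw [hΦ0, Matrix.one_mulVec]
      rw [this, pow_zero, one_mul]
    | succ q ih =>
      have hx : Φ k (q + 1) *ᵥ ζ = A (k + q) *ᵥ (Φ k q *ᵥ ζ) := by
        rw [hΦsucc, ← Matrix.mulVec_mulVec]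
      obtain ⟨i, _, hi⟩ := Finset.exists_mem_eq_sup' (univ_nonempty (α := n))
        (Φ k (q+1) *ᵥ ζ)
      obtain ⟨i', _, hi'⟩ := Finset.exists_mem_eq_inf' (univ_nonempty (α := n))
        (Φ k (q+1) *ᵥ ζ)
      rw [hi, hi', hx]
      calc (A (k+q) *ᵥ (Φ k q *ᵥ ζ)) i - (A (k+q) *ᵥ (Φ k q *ᵥ ζ)) i'
          ≤ (1 - (N:ℝ) * ε) * (univ.sup' univ_nonempty (Φ k q *ᵥ ζ) -
              univ.inf' univ_nonempty (Φ k q *ᵥ ζ)) := by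
            have := osc_step ε (A (k+q)) (hA (k+q)) (hstoch (k+q)) (Φ k q *ᵥ ζ) i i'
            simpa using this
        _ ≤ δ * (δ ^ q * (S - I)) := mul_le_mul_of_nonneg_left ih hδ0
        _ = δ ^ (q+1) * (S - I) := by ring
  have hSI : S - I ≤ 2 * ‖ζ‖ := by
    have h1 : S ≤ ‖ζ‖ := Finset.sup'_le _ _ fun j _ =>
      le_trans (le_abs_self _) (by rw [← Real.norm_eq_abs]; exact norm_le_pi_norm ζ j)
    have h2 : -‖ζ‖ ≤ I := Finset.le_inf' _ _ fun j _ =>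
      neg_le_of_neg_le (le_trans (neg_le_abs _) (by rw [← Real.norm_eq_abs]; exact norm_le_pi_norm ζ j))
    linarith
  -- pick index attaining sup norm of x
  obtain ⟨j₀, _, hj₀⟩ := Finset.exists_mem_eq_sup' (univ_nonempty (α := n)) fun j => |x j|
  have hxj₀ : ‖x‖ ≤ |x j₀| := by
    rw [← hj₀]
    exact pi_norm_le_iff_of_nonneg (by rw [hj₀]; positivity) |>.mpr fun i =>
      by rw [Real.norm_eq_abs]; exact Finset.le_sup' (f := fun j => |x j|) (mem_univ i)
  have hζ0 : 0 ≤ ‖ζ‖ := norm_nonneg ζ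
  have hbig : ‖ζ‖ / 2 ≤ |x j₀| := by
    calc ‖ζ‖ / 2 = 1/2 * ‖ζ‖ := by ring
      _ ≤ ‖Φ k p *ᵥ ζ‖ := hζ
      _ ≤ |x j₀| := hxj₀
  -- oscillation bound on x relative to x j₀
  have hoscx : ∀ j, |x j - x j₀| ≤ δ ^ p * (2 * ‖ζ‖) := by
    intro j
    have h1 : x j ≤ univ.sup' univ_nonempty x := Finset.le_sup' _ (mem_univ j)
    have h2 : univ.inf' univ_nonempty x ≤ x j := Finset.inf'_le _ (mem_univ j)
    have h3 : x j₀ ≤ univ.sup' univ_nonempty x := Finset.le_sup' _ (mem_univ j₀)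
    have h4 : univ.inf' univ_nonempty x ≤ x j₀ := Finset.inf'_le _ (mem_univ j₀)
    have h5 := hosc p
    have h6 : δ ^ p * (S - I) ≤ δ ^ p * (2 * ‖ζ‖) :=
      mul_le_mul_of_nonneg_left hSI (pow_nonneg hδ0 p)
    rw [abs_sub_le_iff]
    constructor <;> [skip; skip] <;> linarith
  have hδp : δ ^ p * (2 * ‖ζ‖) ≤ |s| / (16 * K) * (2 * ‖ζ‖) :=
    mul_le_mul_of_nonneg_right (le_of_lt hp) (by positivity)
  -- error estimate
  have herr : |(C *ᵥ x) i₀ - s * x j₀| ≤ |s| * ‖ζ‖ / 8 := by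
    have h1 : (C *ᵥ x) i₀ - s * x j₀ = ∑ j, C i₀ j * (x j - x j₀) := by
      have : (C *ᵥ x) i₀ = ∑ j, C i₀ j * x j := rfl
      rw [this, hsdef, Finset.sum_mul]
      rw [← Finset.sum_sub_distrib]
      congr 1; ext j; ring
    rw [h1]
    calc |∑ j, C i₀ j * (x j - x j₀)| ≤ ∑ j, |C i₀ j * (x j - x j₀)| :=
          Finset.abs_sum_le_sum_abs _ _
      _ ≤ ∑ j, |C i₀ j| * (|s| / (16 * K) * (2 * ‖ζ‖)) := by
          refine Finset.sum_le_sum fun j _ => ?_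
          rw [abs_mul]
          exact mul_le_mul_of_nonneg_left (le_trans (hoscx j) hδp) (abs_nonneg _)
      _ = K * (|s| / (16 * K) * (2 * ‖ζ‖)) := by rw [← Finset.sum_mul]
      _ = |s| * ‖ζ‖ / 8 := by field_simp; ring
  have hout : 3 * |s| * ‖ζ‖ / 8 ≤ |(C *ᵥ x) i₀| := by
    have h1 : |s| * (‖ζ‖ / 2) ≤ |s * x j₀| := by
      rw [abs_mul]
      exact mul_le_mul_of_nonneg_left hbig (abs_nonneg _)
    have h2 : |s * x j₀| - |(C *ᵥ x) i₀| ≤ |(C *ᵥ x) i₀ - s * x j₀| := by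
      rw [abs_sub_comm]
      exact le_trans (abs_sub_abs_le_abs_sub _ _) (le_of_eq rfl)
    linarith
  -- final chain
  have hsq : (3 * |s| * ‖ζ‖ / 8)^2 ≤ ((C *ᵥ x) i₀)^2 := by
    rw [← sq_abs ((C *ᵥ x) i₀)]
    exact pow_le_pow_left₀ (by positivity) hout 2
  have hterm : (3 * |s| * ‖ζ‖ / 8)^2 ≤ (C *ᵥ x) ⬝ᵥ (C *ᵥ x) := by
    refine le_trans hsq ?_
    have : (C *ᵥ x) ⬝ᵥ (C *ᵥ x) = ∑ i, ((C *ᵥ x) i)^2 := by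
      simp [dotProduct, sq]
    rw [this]
    exact Finset.single_le_sum (f := fun i => ((C *ᵥ x) i)^2) (fun i _ => sq_nonneg _) (mem_univ i₀)
  have hsum : (C *ᵥ x) ⬝ᵥ (C *ᵥ x) ≤ ∑ i ∈ Finset.range (p + 1),
      (C *ᵥ ((Φ k i) *ᵥ ζ)) ⬝ᵥ (C *ᵥ ((Φ k i) *ᵥ ζ)) := by
    refine Finset.single_le_sum (f := fun i => (C *ᵥ ((Φ k i) *ᵥ ζ)) ⬝ᵥ (C *ᵥ ((Φ k i) *ᵥ ζ)))
      (fun i _ => ?_) (Finset.self_mem_range_succ p)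
    exact Finset.sum_nonneg fun l _ => mul_self_nonneg _
  have hlhs : (s^2 / (16 * N)) * (ζ ⬝ᵥ ζ) ≤ s^2 / 16 * ‖ζ‖^2 := by
    have h1 : ζ ⬝ᵥ ζ ≤ (N : ℝ) * ‖ζ‖^2 := by
      have : ζ ⬝ᵥ ζ = ∑ j, (ζ j)^2 := by simp [dotProduct, sq]
      rw [this]
      calc ∑ j, (ζ j)^2 ≤ ∑ _j : n, ‖ζ‖^2 := by
            refine Finset.sum_le_sum fun j _ => ?_
            rw [← sq_abs (ζ j)]
            exact pow_le_pow_left₀ (abs_nonneg _)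
              (by rw [← Real.norm_eq_abs]; exact norm_le_pi_norm ζ j) 2
        _ = (N : ℝ) * ‖ζ‖^2 := by rw [Finset.sum_const, card_univ, nsmul_eq_mul]
    have hNpos : (0:ℝ) < N := by exact_mod_cast hN1
    calc (s^2 / (16 * N)) * (ζ ⬝ᵥ ζ) ≤ (s^2 / (16 * N)) * ((N:ℝ) * ‖ζ‖^2) :=
          mul_le_mul_of_nonneg_left h1 (by positivity)
      _ = s^2 / 16 * ‖ζ‖^2 := by field_simp
  have hmid : s^2 / 16 * ‖ζ‖^2 ≤ (3 * |s| * ‖ζ‖ / 8)^2 := by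
    have : (3 * |s| * ‖ζ‖ / 8)^2 = 9 * s^2 * ‖ζ‖^2 / 64 := by
      rw [div_pow]; rw [mul_pow, mul_pow, sq_abs]; norm_num
    rw [this]
    nlinarith [sq_nonneg s, sq_nonneg ‖ζ‖, mul_nonneg (sq_nonneg s) (sq_nonneg ‖ζ‖)]
  linarith
end
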